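/- If moreover ρ ≠ 0, then Ŝ(Y,Z) = (ρ/α)·g(Y,Z) + (α − ρ/α)·π(Y)π(Z) for all Y, Z ∈ V. -/
import Mathlib


open scoped RealInnerProductSpace

/-- Let `(V, ⟪·,·⟫)` be a real inner product space of finite dimension `n ≥ 3`.
Let `Ŝ = S` be a symmetric bilinear form, `P ∈ V` a unit vector, `π(X) = ⟪X,P⟫`,
`α = Ŝ(P,P) ≠ 0`, and suppose
`Ŝ(Y,Z)Ŝ(X,W) − Ŝ(X,Z)Ŝ(Y,W) = ρ(g(Y,Z)g(X,W) − g(X,Z)g(Y,W))` for all `X,Y,Z,W`.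
If moreover `ρ ≠ 0`, then `Ŝ(Y,Z) = (ρ/α)g(Y,Z) + (α − ρ/α)π(Y)π(Z)` for all `Y, Z`. -/
theorem statement2 {V : Type*} [NormedAddCommGroup V] [InnerProductSpace ℝ V]
    [FiniteDimensional ℝ V] (h3 : 3 ≤ Module.finrank ℝ V)
    (S : V →ₗ[ℝ] V →ₗ[ℝ] ℝ) (hSsymm : ∀ X Y : V, S X Y = S Y X)
    (P : V) (hP : ⟪P, P⟫ = 1) (hα : S P P ≠ 0) (ρ : ℝ)
    (hρ : ∀ X Y Z W : V,
      S Y Z * S X W - S X Z * S Y W =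
        ρ * (⟪Y, Z⟫ * ⟪X, W⟫ - ⟪X, Z⟫ * ⟪Y, W⟫))
    (hρ0 : ρ ≠ 0) :
    ∀ Y Z : V, S Y Z =
      (ρ / S P P) * ⟪Y, Z⟫ + (S P P - ρ / S P P) * (⟪Y, P⟫ * ⟪Z, P⟫) := by
  have heta : ∀ X : V, S P X = S P P * ⟪X, P⟫ := by
    intro X
    -- find y ≠ 0 orthogonal to P and X
    set K : Submodule ℝ V := Submodule.span ℝ {P, X} with hK
    have hKfin : Module.finrank ℝ K ≤ 2 := by
      classical
      refine (finrank_span_le_card _).trans ?_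
      simp only [Set.toFinset_insert, Set.toFinset_singleton]
      exact (Finset.card_insert_le _ _).trans (by simp)
    have hpos : 0 < Module.finrank ℝ Kᗮ := by
      have h := Submodule.finrank_add_finrank_orthogonal (K := K)
      omega
    have hne : Kᗮ ≠ ⊥ := by
      intro h
      rw [h] at hpos
      simp at hpos
    obtain ⟨y, hyK, hy0⟩ := Submodule.exists_mem_ne_zero_of_ne_bot hne
    have hyP : ⟪y, P⟫ = 0 := by
      have := (Submodule.mem_orthogonal K y).mp hyK P
        (Submodule.subset_span (by simp))
      rwa [real_inner_comm] at this
    have hyX : ⟪y, X⟫ = 0 := by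
      have := (Submodule.mem_orthogonal K y).mp hyK X
        (Submodule.subset_span (by simp))
      rwa [real_inner_comm] at this
    have hyy : ⟪y, y⟫ ≠ 0 := (inner_self_ne_zero (𝕜 := ℝ)).mpr hy0
    have hPy : ⟪P, y⟫ = 0 := by rw [real_inner_comm]; exact hyP
    have hXy : ⟪X, y⟫ = 0 := by rw [real_inner_comm]; exact hyX
    have A := hρ X y y P
    have B := hρ P y y P
    have C := hρ P y X P
    simp only [hP, hyP, hPy, hyX, hXy, mul_zero, zero_mul, mul_one, one_mul,
      sub_zero, zero_sub] at A B C
    rw [hSsymm X y, hSsymm y P, hSsymm X P] at A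
    rw [hSsymm y P] at B
    rw [hSsymm y P] at C
    have key : ρ * ⟪y, y⟫ * (S P X - S P P * ⟪X, P⟫) = 0 := by
      linear_combination (S P P) * A - (S P X) * B + (S P y) * C
    have := mul_ne_zero hρ0 hyy
    have h2 : S P X - S P P * ⟪X, P⟫ = 0 := by
      rcases mul_eq_zero.mp key with h | h
      · exact absurd h this
      · exact h
    linarith
  intro Y Z
  have E := hρ P Y Z P
  rw [hP] at E
  have h1 : S P Z = S P P * ⟪Z, P⟫ := heta Z
  have h2 : S Y P = S P P * ⟪Y, P⟫ := by rw [hSsymm Y P]; exact heta Y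
  have h3' : ⟪Z, P⟫ = ⟪P, Z⟫ := real_inner_comm P Z
  have main : S Y Z * S P P =
      ρ * ⟪Y, Z⟫ + (S P P * S P P - ρ) * (⟪Y, P⟫ * ⟪Z, P⟫) := by
    linear_combination E + (S Y P) * h1 + (S P P * ⟪Z, P⟫) * h2
      + (ρ * ⟪Y, P⟫) * h3'
  field_simp
  linear_combination main
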